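/- For every natural number ℓ ≥ 2 there exist a finite simple undirected bipartite graph G = (V, E) with edge weights w : E → ℤ and an ℓ-th smallest perfect matching M of G such that for every set of edges F ⊆ E with |F| < ℓ − 1, the minimum of w(M') over all perfect matchings M' of G with F ⊆ M' is not equal to w(M). (Hence the bound ℓ − 1 on the number of fixed edges for bipartite graphs is tight.) -/

import Mathlib

variable {V : Type} [Fintype V] [DecidableEq V]

/-- A perfect matching of a graph `G`, viewed as a finite set of edges:
every edge belongs to `G` and every vertex lies in exactly one edge of `M`. -/
def IsPM (G : SimpleGraph V) (M : Finset (Sym2 V)) : Prop :=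
  (∀ e ∈ M, e ∈ G.edgeSet) ∧ ∀ v : V, ∃! e, e ∈ M ∧ v ∈ e

/-- The total weight of a set of edges. -/
def wt (w : Sym2 V → ℤ) (X : Finset (Sym2 V)) : ℤ := ∑ e ∈ X, w e

/-- `NthSmallest G w ℓ M` (for `ℓ ≥ 1`) : `M` is an `ℓ`-th smallest perfect matching of `G`,
defined recursively: `M` is a perfect matching, `M` is not `ℓ'`-th smallest for any
`1 ≤ ℓ' < ℓ`, and `M` has minimum weight among all perfect matchings that are not `ℓ'`-th
smallest for any `1 ≤ ℓ' < ℓ`. -/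
def NthSmallest (G : SimpleGraph V) (w : Sym2 V → ℤ) : ℕ → Finset (Sym2 V) → Prop
  | ℓ, M =>
    IsPM G M ∧
    (∀ ℓ' : ℕ, 1 ≤ ℓ' → ℓ' < ℓ → ¬ NthSmallest G w ℓ' M) ∧
    ∀ M' : Finset (Sym2 V), IsPM G M' →
      (∀ ℓ' : ℕ, 1 ≤ ℓ' → ℓ' < ℓ → ¬ NthSmallest G w ℓ' M') → wt w M ≤ wt w M'
  termination_by ℓ _ => ℓ


namespace BBT


def G (k : ℕ) : SimpleGraph (Fin (4*k)) where
  Adj u v := (u:ℕ)/4 = (v:ℕ)/4 ∧ ((u:ℕ)%4 + (v:ℕ)%4) % 2 = 1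
  symm := ⟨by intro u v ⟨h1, h2⟩; exact ⟨h1.symm, by omega⟩⟩
  loopless := ⟨by intro u ⟨h1, h2⟩; omega⟩

def vt {k : ℕ} (i : Fin k) (r : ℕ) (hr : r < 4) : Fin (4*k) :=
  ⟨4*i.val + r, by have := i.isLt; omega⟩

def ea {k : ℕ} (i : Fin k) : Sym2 (Fin (4*k)) := s(vt i 0 (by omega), vt i 1 (by omega))
def ea' {k : ℕ} (i : Fin k) : Sym2 (Fin (4*k)) := s(vt i 2 (by omega), vt i 3 (by omega))
def eb {k : ℕ} (i : Fin k) : Sym2 (Fin (4*k)) := s(vt i 0 (by omega), vt i 3 (by omega))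
def eb' {k : ℕ} (i : Fin k) : Sym2 (Fin (4*k)) := s(vt i 1 (by omega), vt i 2 (by omega))

open Classical in
noncomputable def w (k : ℕ) : Sym2 (Fin (4*k)) → ℤ :=
  fun e => if ∃ i : Fin k, e = eb' i then 1 else 0

lemma w_eb' {k : ℕ} (i : Fin k) : w k (eb' i) = 1 := by
  simp only [w]; rw [if_pos ⟨i, rfl⟩]

lemma vt_val {k : ℕ} (i : Fin k) (r : ℕ) (hr : r < 4) : (vt i r hr : ℕ) = 4*i.val + r := rfl

lemma w_eb {k : ℕ} (i : Fin k) : w k (eb i) = 0 := by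
  simp only [w]; rw [if_neg]
  rintro ⟨j, hj⟩
  rw [eb, eb', Sym2.eq_iff] at hj
  rcases hj with ⟨h1, h2⟩ | ⟨h1, h2⟩ <;>
    simp only [Fin.ext_iff, vt_val] at h1 h2 <;> omega

lemma w_ea {k : ℕ} (i : Fin k) : w k (ea i) = 0 := by
  simp only [w]; rw [if_neg]
  rintro ⟨j, hj⟩
  rw [ea, eb', Sym2.eq_iff] at hj
  rcases hj with ⟨h1, h2⟩ | ⟨h1, h2⟩ <;>
    simp only [Fin.ext_iff, vt_val] at h1 h2 <;> omega

lemma w_ea' {k : ℕ} (i : Fin k) : w k (ea' i) = 0 := by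
  simp only [w]; rw [if_neg]
  rintro ⟨j, hj⟩
  rw [ea', eb', Sym2.eq_iff] at hj
  rcases hj with ⟨h1, h2⟩ | ⟨h1, h2⟩ <;>
    simp only [Fin.ext_iff, vt_val] at h1 h2 <;> omega

lemma ea_mem {k : ℕ} (i : Fin k) : ea i ∈ (G k).edgeSet := by
  rw [ea, SimpleGraph.mem_edgeSet]; constructor <;> simp [vt_val, G] <;> omega
lemma ea'_mem {k : ℕ} (i : Fin k) : ea' i ∈ (G k).edgeSet := by
  rw [ea', SimpleGraph.mem_edgeSet]; constructor <;> simp [vt_val, G] <;> omega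
lemma eb_mem {k : ℕ} (i : Fin k) : eb i ∈ (G k).edgeSet := by
  rw [eb, SimpleGraph.mem_edgeSet]; constructor <;> simp [vt_val, G] <;> omega
lemma eb'_mem {k : ℕ} (i : Fin k) : eb' i ∈ (G k).edgeSet := by
  rw [eb', SimpleGraph.mem_edgeSet]; constructor <;> simp [vt_val, G] <;> omega

/-- classification of edges of G -/
lemma edge_classify {k : ℕ} {e : Sym2 (Fin (4*k))} (he : e ∈ (G k).edgeSet) :
    ∃ i : Fin k, e = ea i ∨ e = ea' i ∨ e = eb i ∨ e = eb' i := by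
  induction e using Sym2.ind with
  | _ u v =>
    rw [SimpleGraph.mem_edgeSet] at he
    obtain ⟨h1, h2⟩ := he
    have hu := u.isLt
    have hv := v.isLt
    refine ⟨⟨(u:ℕ)/4, by omega⟩, ?_⟩
    have hcase : ((u:ℕ)%4 = 0 ∧ (v:ℕ)%4 = 1) ∨ ((u:ℕ)%4 = 1 ∧ (v:ℕ)%4 = 0) ∨
        ((u:ℕ)%4 = 2 ∧ (v:ℕ)%4 = 3) ∨ ((u:ℕ)%4 = 3 ∧ (v:ℕ)%4 = 2) ∨
        ((u:ℕ)%4 = 0 ∧ (v:ℕ)%4 = 3) ∨ ((u:ℕ)%4 = 3 ∧ (v:ℕ)%4 = 0) ∨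
        ((u:ℕ)%4 = 1 ∧ (v:ℕ)%4 = 2) ∨ ((u:ℕ)%4 = 2 ∧ (v:ℕ)%4 = 1) := by omega
    rcases hcase with ⟨h3,h4⟩|⟨h3,h4⟩|⟨h3,h4⟩|⟨h3,h4⟩|⟨h3,h4⟩|⟨h3,h4⟩|⟨h3,h4⟩|⟨h3,h4⟩ <;>
      simp only [ea, ea', eb, eb', Sym2.eq_iff, Fin.ext_iff, vt_val] <;> omega

def MS {k : ℕ} (S : Finset (Fin k)) : Finset (Sym2 (Fin (4*k))) :=
  Finset.univ.biUnion (fun i => if i ∈ S then {eb i, eb' i} else {ea i, ea' i})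

lemma mem_MS {k : ℕ} {S : Finset (Fin k)} {e : Sym2 (Fin (4*k))} :
    e ∈ MS S ↔ ∃ i : Fin k,
      (i ∈ S ∧ (e = eb i ∨ e = eb' i)) ∨ (i ∉ S ∧ (e = ea i ∨ e = ea' i)) := by
  simp only [MS, Finset.mem_biUnion, Finset.mem_univ, true_and]
  constructor
  · rintro ⟨i, hi⟩
    by_cases h : i ∈ S
    · rw [if_pos h] at hi; simp only [Finset.mem_insert, Finset.mem_singleton] at hi
      exact ⟨i, Or.inl ⟨h, hi⟩⟩
    · rw [if_neg h] at hi; simp only [Finset.mem_insert, Finset.mem_singleton] at hi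
      exact ⟨i, Or.inr ⟨h, hi⟩⟩
  · rintro ⟨i, ⟨h, he⟩ | ⟨h, he⟩⟩
    · exact ⟨i, by rw [if_pos h]; simpa using he⟩
    · exact ⟨i, by rw [if_neg h]; simpa using he⟩

lemma MS_subset_edges {k : ℕ} (S : Finset (Fin k)) : ∀ e ∈ MS S, e ∈ (G k).edgeSet := by
  intro e he
  rw [mem_MS] at he
  obtain ⟨i, ⟨_, rfl | rfl⟩ | ⟨_, rfl | rfl⟩⟩ := he
  exacts [eb_mem i, eb'_mem i, ea_mem i, ea'_mem i]

/-- the cycle index of a vertex -/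
def cyc {k : ℕ} (v : Fin (4*k)) : Fin k := ⟨(v:ℕ)/4, by have := v.isLt; omega⟩

/-- the canonical matched edge at a vertex -/
noncomputable def me {k : ℕ} (S : Finset (Fin k)) (v : Fin (4*k)) : Sym2 (Fin (4*k)) :=
  if cyc v ∈ S then (if (v:ℕ)%4 = 0 ∨ (v:ℕ)%4 = 3 then eb (cyc v) else eb' (cyc v))
  else (if (v:ℕ)%4 = 0 ∨ (v:ℕ)%4 = 1 then ea (cyc v) else ea' (cyc v))

lemma me_mem_MS {k : ℕ} (S : Finset (Fin k)) (v : Fin (4*k)) : me S v ∈ MS S := by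
  rw [mem_MS]
  refine ⟨cyc v, ?_⟩
  by_cases h : cyc v ∈ S
  · rw [me, if_pos h]; exact Or.inl ⟨h, by split_ifs <;> simp⟩
  · rw [me, if_neg h]; exact Or.inr ⟨h, by split_ifs <;> simp⟩

lemma mem_me {k : ℕ} (S : Finset (Fin k)) (v : Fin (4*k)) : v ∈ me S v := by
  have hv := v.isLt
  have hc : (cyc v : ℕ) = (v:ℕ)/4 := rfl
  rw [me]
  split_ifs <;> simp only [ea, ea', eb, eb', Sym2.mem_iff, Fin.ext_iff, vt_val, hc] <;> omega

lemma eq_me {k : ℕ} {S : Finset (Fin k)} {e : Sym2 (Fin (4*k))} (he : e ∈ MS S)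
    {v : Fin (4*k)} (hv : v ∈ e) : e = me S v := by
  have hvlt := v.isLt
  have hc : (cyc v : ℕ) = (v:ℕ)/4 := rfl
  rw [mem_MS] at he
  obtain ⟨j, ⟨hjS, rfl | rfl⟩ | ⟨hjS, rfl | rfl⟩⟩ := he <;>
    simp only [ea, ea', eb, eb', Sym2.mem_iff, Fin.ext_iff, vt_val] at hv <;>
    (obtain rfl : j = cyc v := Fin.ext (by rw [hc]; omega)) <;>
    rw [me] <;> split_ifs <;>
    first
      | rfl
      | omega
      | exact absurd hjS (by assumption)
      | exact absurd (by assumption) hjS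

lemma MS_isPM {k : ℕ} (S : Finset (Fin k)) : IsPM (G k) (MS S) := by
  refine ⟨MS_subset_edges S, fun v => ⟨me S v, ⟨me_mem_MS S v, mem_me S v⟩, ?_⟩⟩
  rintro e ⟨he, hve⟩
  exact eq_me he hve

lemma eb_ne_eb' {k : ℕ} (i : Fin k) : eb i ≠ eb' i := by
  simp only [ne_eq, eb, eb', Sym2.eq_iff, Fin.ext_iff, vt_val]; omega

lemma ea_ne_ea' {k : ℕ} (i : Fin k) : ea i ≠ ea' i := by
  simp only [ne_eq, ea, ea', Sym2.eq_iff, Fin.ext_iff, vt_val]; omega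

lemma pairs_disjoint {k : ℕ} (S : Finset (Fin k)) :
    (↑(Finset.univ : Finset (Fin k)) : Set (Fin k)).PairwiseDisjoint
      (fun i => if i ∈ S then ({eb i, eb' i} : Finset (Sym2 (Fin (4*k)))) else {ea i, ea' i}) := by
  intro i _ j _ hij
  simp only [Finset.disjoint_left]
  intro e he he'
  have hij' : (i:ℕ) ≠ (j:ℕ) := fun h => hij (Fin.ext h)
  split_ifs at he he' <;>
    simp only [Finset.mem_insert, Finset.mem_singleton] at he he' <;>
    rcases he with rfl | rfl <;>
    simp only [ea, ea', eb, eb', Sym2.eq_iff, Fin.ext_iff, vt_val] at he' <;> omega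

lemma wt_MS {k : ℕ} (S : Finset (Fin k)) : wt (w k) (MS S) = S.card := by
  rw [wt, MS, Finset.sum_biUnion (pairs_disjoint S)]
  have : ∀ i : Fin k,
      (∑ e ∈ (if i ∈ S then ({eb i, eb' i} : Finset (Sym2 (Fin (4*k)))) else {ea i, ea' i}),
        w k e) = if i ∈ S then 1 else 0 := by
    intro i
    by_cases h : i ∈ S
    · rw [if_pos h, if_pos h, Finset.sum_pair (eb_ne_eb' i), w_eb, w_eb']; norm_num
    · rw [if_neg h, if_neg h, Finset.sum_pair (ea_ne_ea' i), w_ea, w_ea']; norm_num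
  rw [Finset.sum_congr rfl (fun i _ => this i)]
  rw [Finset.sum_ite_mem, Finset.univ_inter, Finset.sum_const]
  simp

lemma touch {k : ℕ} {M : Finset (Sym2 (Fin (4*k)))} (hsub : ∀ e ∈ M, e ∈ (G k).edgeSet)
    {e : Sym2 (Fin (4*k))} (he : e ∈ M) (i : Fin k) (r : ℕ) (hr : r < 4)
    (hv : vt i r hr ∈ e) :
    (r = 0 → e = ea i ∨ e = eb i) ∧ (r = 1 → e = ea i ∨ e = eb' i) ∧
    (r = 2 → e = ea' i ∨ e = eb' i) ∧ (r = 3 → e = ea' i ∨ e = eb i) := by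
  obtain ⟨j, rfl | rfl | rfl | rfl⟩ := edge_classify (hsub e he) <;>
    simp only [ea, ea', eb, eb', Sym2.mem_iff, Fin.ext_iff, vt_val] at hv <;>
    (obtain rfl : j = i := Fin.ext (by omega)) <;>
    refine ⟨fun h => ?_, fun h => ?_, fun h => ?_, fun h => ?_⟩ <;>
    first
      | exact Or.inl rfl
      | exact Or.inr rfl
      | omega

lemma isPM_eq_MS {k : ℕ} {M : Finset (Sym2 (Fin (4*k)))} (hM : IsPM (G k) M) :
    ∃ S : Finset (Fin k), M = MS S := by
  obtain ⟨hsub, hcov⟩ := hM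
  have huniq : ∀ (v : Fin (4*k)) (e e' : Sym2 (Fin (4*k))), e ∈ M → e' ∈ M →
      v ∈ e → v ∈ e' → e = e' := by
    intro v e e' he he' hv hv'
    exact ((hcov v).unique ⟨he, hv⟩ ⟨he', hv'⟩)
  have dich : ∀ i : Fin k,
      (eb i ∈ M ∧ eb' i ∈ M ∧ ea i ∉ M ∧ ea' i ∉ M) ∨
      (eb i ∉ M ∧ eb' i ∉ M ∧ ea i ∈ M ∧ ea' i ∈ M) := by
    intro i
    obtain ⟨e0, ⟨he0M, he0v⟩, -⟩ := hcov (vt i 0 (by omega))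
    have h0 := (touch hsub he0M i 0 (by omega) he0v).1 rfl
    have m03 : vt i 3 (by omega) ∈ eb i := Sym2.mem_mk_right _ _
    have m00 : vt i 0 (by omega) ∈ eb i := Sym2.mem_mk_left _ _
    have ma0 : vt i 0 (by omega) ∈ ea i := Sym2.mem_mk_left _ _
    have ma1 : vt i 1 (by omega) ∈ ea i := Sym2.mem_mk_right _ _
    have ma'2 : vt i 2 (by omega) ∈ ea' i := Sym2.mem_mk_left _ _
    have ma'3 : vt i 3 (by omega) ∈ ea' i := Sym2.mem_mk_right _ _
    have mb'1 : vt i 1 (by omega) ∈ eb' i := Sym2.mem_mk_left _ _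
    have mb'2 : vt i 2 (by omega) ∈ eb' i := Sym2.mem_mk_right _ _
    have hne : ea i ≠ eb i := by
      simp only [ne_eq, ea, eb, Sym2.eq_iff, Fin.ext_iff, vt_val]; omega
    have hne2 : ea i ≠ eb' i := by
      simp only [ne_eq, ea, eb', Sym2.eq_iff, Fin.ext_iff, vt_val]; omega
    have hne3 : ea' i ≠ eb i := by
      simp only [ne_eq, ea', eb, Sym2.eq_iff, Fin.ext_iff, vt_val]; omega
    have hne4 : ea' i ≠ eb' i := by
      simp only [ne_eq, ea', eb', Sym2.eq_iff, Fin.ext_iff, vt_val]; omega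
    rcases h0 with rfl | rfl
    · right
      have hbn : eb i ∉ M := fun hb => hne (huniq _ _ _ he0M hb ma0 m00)
      have hb'n : eb' i ∉ M := fun hb => hne2 (huniq _ _ _ he0M hb ma1 mb'1)
      refine ⟨hbn, hb'n, he0M, ?_⟩
      obtain ⟨e2, ⟨he2M, he2v⟩, -⟩ := hcov (vt i 2 (by omega))
      rcases (touch hsub he2M i 2 (by omega) he2v).2.2.1 rfl with rfl | rfl
      · exact he2M
      · exact absurd he2M hb'n
    · left
      have han : ea i ∉ M := fun ha => hne (huniq _ _ _ ha he0M ma0 m00)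
      have ha'n : ea' i ∉ M := fun ha => hne3 (huniq _ _ _ ha he0M ma'3 m03)
      refine ⟨he0M, ?_, han, ha'n⟩
      obtain ⟨e2, ⟨he2M, he2v⟩, -⟩ := hcov (vt i 2 (by omega))
      rcases (touch hsub he2M i 2 (by omega) he2v).2.2.1 rfl with rfl | rfl
      · exact absurd he2M ha'n
      · exact he2M
  refine ⟨Finset.univ.filter (fun i => eb i ∈ M), ?_⟩
  ext e
  rw [mem_MS]
  constructor
  · intro he
    obtain ⟨j, h⟩ := edge_classify (hsub e he)
    refine ⟨j, ?_⟩
    rcases dich j with ⟨h1, h2, h3, h4⟩ | ⟨h1, h2, h3, h4⟩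
    · refine Or.inl ⟨Finset.mem_filter.2 ⟨Finset.mem_univ _, h1⟩, ?_⟩
      rcases h with rfl | rfl | rfl | rfl
      exacts [absurd he h3, absurd he h4, Or.inl rfl, Or.inr rfl]
    · refine Or.inr ⟨fun hc => h1 (Finset.mem_filter.1 hc).2, ?_⟩
      rcases h with rfl | rfl | rfl | rfl
      exacts [Or.inl rfl, Or.inr rfl, absurd he h1, absurd he h2]
  · rintro ⟨j, ⟨hj, rfl | rfl⟩ | ⟨hj, rfl | rfl⟩⟩
    · exact (Finset.mem_filter.1 hj).2
    · rcases dich j with ⟨h1, h2, h3, h4⟩ | ⟨h1, h2, h3, h4⟩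
      · exact h2
      · exact absurd (Finset.mem_filter.1 hj).2 h1
    · rcases dich j with ⟨h1, h2, h3, h4⟩ | ⟨h1, h2, h3, h4⟩
      · exact absurd h1 (fun hc => hj (Finset.mem_filter.2 ⟨Finset.mem_univ _, hc⟩))
      · exact h3
    · rcases dich j with ⟨h1, h2, h3, h4⟩ | ⟨h1, h2, h3, h4⟩
      · exact absurd h1 (fun hc => hj (Finset.mem_filter.2 ⟨Finset.mem_univ _, hc⟩))
      · exact h4

lemma exists_card {k : ℕ} (j : ℕ) (hj : j ≤ k) : ∃ S : Finset (Fin k), S.card = j := by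
  obtain ⟨S, -, hS⟩ := Finset.exists_subset_card_eq (s := (Finset.univ : Finset (Fin k)))
    (by simpa using hj)
  exact ⟨S, hS⟩

lemma nth_iff (k : ℕ) : ∀ j, j ≤ k → ∀ M, NthSmallest (G k) (w k) (j+1) M ↔
    (IsPM (G k) M ∧ wt (w k) M = j) := by
  intro j
  induction j using Nat.strong_induction_on with
  | _ j IH =>
    intro hj M
    rw [NthSmallest]
    constructor
    · rintro ⟨hPM, hA, hB⟩
      refine ⟨hPM, ?_⟩
      obtain ⟨S, rfl⟩ := isPM_eq_MS hPM
      rw [wt_MS]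
      have hge : j ≤ S.card := by
        by_contra h
        push_neg at h
        exact hA (S.card + 1) (by omega) (by omega)
          ((IH S.card (by omega) (by omega) _).2 ⟨MS_isPM S, wt_MS S⟩)
      have hle : S.card ≤ j := by
        obtain ⟨T, hT⟩ := exists_card (k := k) j hj
        have hmin := hB (MS T) (MS_isPM T) ?_
        · rw [wt_MS, wt_MS, hT] at hmin
          exact_mod_cast hmin
        · intro ℓ' h1 h2 hN
          obtain ⟨i, rfl⟩ : ∃ i, ℓ' = i + 1 := ⟨ℓ' - 1, by omega⟩
          have hh := ((IH i (by omega) (by omega) (MS T)).1 hN).2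
          rw [wt_MS, hT] at hh
          have : j = i := by exact_mod_cast hh
          omega
      have : S.card = j := le_antisymm hle hge
      exact_mod_cast congrArg (Nat.cast : ℕ → ℤ) this
    · rintro ⟨hPM, hwt⟩
      refine ⟨hPM, ?_, ?_⟩
      · intro ℓ' h1 h2 hN
        obtain ⟨i, rfl⟩ : ∃ i, ℓ' = i + 1 := ⟨ℓ' - 1, by omega⟩
        have hh := ((IH i (by omega) (by omega) M).1 hN).2
        rw [hwt] at hh
        have : j = i := by exact_mod_cast hh
        omega
      · intro M' hPM' hA'
        obtain ⟨S', rfl⟩ := isPM_eq_MS hPM'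
        rw [hwt, wt_MS]
        by_contra h
        push_neg at h
        have hc : S'.card < j := by exact_mod_cast h
        exact hA' (S'.card + 1) (by omega) (by omega)
          ((IH S'.card (by omega) (by omega) _).2 ⟨hPM', wt_MS S'⟩)

end BBT

theorem bipartite_bound_tight (ℓ : ℕ) (hℓ : 2 ≤ ℓ) :
    ∃ (n : ℕ) (G : SimpleGraph (Fin n)) (w : Sym2 (Fin n) → ℤ) (M : Finset (Sym2 (Fin n))),
      (∃ X : Set (Fin n), ∀ u v : Fin n, G.Adj u v → (u ∈ X ↔ v ∉ X)) ∧
      NthSmallest G w ℓ M ∧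
      ∀ F : Finset (Sym2 (Fin n)), (∀ e ∈ F, e ∈ G.edgeSet) → F.card < ℓ - 1 →
        ¬ IsLeast {k : ℤ | ∃ M' : Finset (Sym2 (Fin n)), IsPM G M' ∧ F ⊆ M' ∧ wt w M' = k}
            (wt w M) := by
  classical
  set k := ℓ - 1 with hk
  have hk1 : 1 ≤ k := by omega
  refine ⟨4*k, BBT.G k, BBT.w k, BBT.MS (Finset.univ : Finset (Fin k)), ?_, ?_, ?_⟩
  · refine ⟨{v : Fin (4*k) | (v:ℕ) % 2 = 0}, ?_⟩
    intro u v huv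
    obtain ⟨h1, h2⟩ := huv
    simp only [Set.mem_setOf_eq]
    omega
  · have hℓk : ℓ = k + 1 := by omega
    rw [hℓk]
    refine (BBT.nth_iff k k le_rfl _).2 ⟨BBT.MS_isPM _, ?_⟩
    rw [BBT.wt_MS]
    simp
  · intro F hF hFcard hLeast
    obtain ⟨M', hPM', hFM', hwM'⟩ := hLeast.1
    obtain ⟨S', rfl⟩ := BBT.isPM_eq_MS hPM'
    rw [BBT.wt_MS, BBT.wt_MS] at hwM'
    have hS'card : S'.card = k := by
      have : S'.card = (Finset.univ : Finset (Fin k)).card := by exact_mod_cast hwM'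
      simpa using this
    have hS' : S' = Finset.univ := Finset.eq_univ_of_card S' (by simpa using hS'card)
    subst hS'
    -- the set of cycles touched by F
    set T : Finset (Fin k) := Finset.univ.filter
      (fun i => BBT.eb i ∈ F ∨ BBT.eb' i ∈ F) with hT
    have hTcard : T.card ≤ F.card := by
      refine Finset.card_le_card_of_injOn
        (fun i => if BBT.eb i ∈ F then BBT.eb i else BBT.eb' i) ?_ ?_
      · intro i hi
        replace hi : i ∈ T := hi
        rw [hT, Finset.mem_filter] at hi
        by_cases h : BBT.eb i ∈ F
        · simpa [h] using h
        · have := hi.2.resolve_left h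
          simpa [h] using this
      · intro i _ j _ hfij
        dsimp only at hfij
        by_contra hij
        have hij' : (i:ℕ) ≠ (j:ℕ) := fun h => hij (Fin.ext h)
        split_ifs at hfij <;>
          simp only [BBT.eb, BBT.eb', Sym2.eq_iff, Fin.ext_iff, BBT.vt_val] at hfij <;>
          omega
    have : ∃ i0 : Fin k, i0 ∉ T := by
      by_contra h
      push_neg at h
      have : T = Finset.univ := Finset.eq_univ_iff_forall.2 h
      rw [this] at hTcard
      simp only [Finset.card_univ, Fintype.card_fin] at hTcard
      omega
    obtain ⟨i0, hi0⟩ := this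
    have hFsub : F ⊆ BBT.MS (Finset.univ.erase i0) := by
      intro e heF
      have heM := hFM' heF
      rw [BBT.mem_MS] at heM
      obtain ⟨j, ⟨-, hj⟩ | ⟨hj, -⟩⟩ := heM
      swap
      · exact absurd (Finset.mem_univ j) hj
      have hji0 : j ≠ i0 := by
        rintro rfl
        apply hi0
        rw [hT, Finset.mem_filter]
        rcases hj with rfl | rfl
        · exact ⟨Finset.mem_univ _, Or.inl heF⟩
        · exact ⟨Finset.mem_univ _, Or.inr heF⟩
      rw [BBT.mem_MS]
      exact ⟨j, Or.inl ⟨Finset.mem_erase.2 ⟨hji0, Finset.mem_univ _⟩, hj⟩⟩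
    have hlb := hLeast.2 ⟨BBT.MS (Finset.univ.erase i0), BBT.MS_isPM _, hFsub, rfl⟩
    rw [BBT.wt_MS, BBT.wt_MS] at hlb
    rw [Finset.card_erase_of_mem (Finset.mem_univ i0)] at hlb
    simp only [Finset.card_univ, Fintype.card_fin] at hlb
    omega
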